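/- Contraction of the full-drop lifted matrix (Lemma 1(c)): let A_1, B_1 be full-drop AIMD matrices with e^T x = 0 implying ||A_1 x||_1 ≤ β_a ||x||_1 and ||B_1 x||_1 ≤ β_b ||x||_1, β_a, β_b ∈ (0,1). Let γ_{1a} have k-th block of its first block column equal to (1/k) Σ_{i=0}^{k-1} A_1^{N-i} (similarly γ_{1b} with B_1), and Γ_1 = diag(γ_{1a}, γ_{1b}). Then for all ζ ∈ E (i.e., e^T z_{a,1} = e^T z_{b,1} = 0), ||Γ_1 ζ||_{N,1} ≤ q ||ζ||_{N,1} with q = max((1/N) Σ_{i=1}^N β_a^i, (1/N) Σ_{j=1}^N β_b^j) < 1. -/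

import Mathlib

lemma aux_sumzero {n : ℕ} (C : Matrix (Fin n) (Fin n) ℝ)
    (hcs : ∀ j, ∑ i, C i j = 1) (x : Fin n → ℝ) (hx : ∑ i, x i = 0) :
    ∑ i, C.mulVec x i = 0 := by
  simp only [Matrix.mulVec, dotProduct]
  rw [Finset.sum_comm]
  calc ∑ j, ∑ i, C i j * x j = ∑ j, x j := by
        refine Finset.sum_congr rfl fun j _ => ?_
        rw [← Finset.sum_mul, hcs j, one_mul]
    _ = 0 := hx

lemma aux_pow {n : ℕ} (C : Matrix (Fin n) (Fin n) ℝ) (β : ℝ) (hβ0 : 0 ≤ β)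
    (hcs : ∀ j, ∑ i, C i j = 1)
    (hcontr : ∀ x : Fin n → ℝ, ∑ i, x i = 0 →
      ∑ i, |C.mulVec x i| ≤ β * ∑ i, |x i|) :
    ∀ m, ∀ x : Fin n → ℝ, ∑ i, x i = 0 →
      ∑ i, |(C ^ (m + 1)).mulVec x i| ≤ β ^ (m + 1) * ∑ i, |x i| := by
  intro m
  induction m with
  | zero => intro x hx; simpa using hcontr x hx
  | succ m ih =>
    intro x hx
    have h1 : (C ^ (m + 2)).mulVec x = (C ^ (m + 1)).mulVec (C.mulVec x) := by
      rw [Matrix.mulVec_mulVec, ← pow_succ]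
    rw [h1]
    calc ∑ i, |(C ^ (m + 1)).mulVec (C.mulVec x) i|
        ≤ β ^ (m + 1) * ∑ i, |C.mulVec x i| := ih _ (aux_sumzero C hcs x hx)
      _ ≤ β ^ (m + 1) * (β * ∑ i, |x i|) := by
          exact mul_le_mul_of_nonneg_left (hcontr x hx) (pow_nonneg hβ0 _)
      _ = β ^ (m + 2) * ∑ i, |x i| := by ring

lemma aux_avg (N k : ℕ) (hk : k < N) (β : ℝ) (hβ0 : 0 < β) (hβ1 : β < 1) :
    (N : ℝ) * ∑ j ∈ Finset.range (k + 1), β ^ (N - j)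
      ≤ ((k : ℝ) + 1) * ∑ i ∈ Finset.Icc 1 N, β ^ i := by
  have hre : ∑ j ∈ Finset.range (k + 1), β ^ (N - j)
      = ∑ i ∈ Finset.Icc (N - k) N, β ^ i := by
    refine Finset.sum_nbij' (fun j => N - j) (fun i => N - i) ?_ ?_ ?_ ?_ ?_
    · intro j hj
      simp only [Finset.mem_range] at hj
      simp only [Finset.mem_Icc]
      omega
    · intro i hi
      simp only [Finset.mem_Icc] at hi
      simp only [Finset.mem_range]
      omega
    · intro j hj
      simp only [Finset.mem_range] at hj
      show N - (N - j) = j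
      omega
    · intro i hi
      simp only [Finset.mem_Icc] at hi
      show N - (N - i) = i
      omega
    · intro j hj; rfl
  rw [hre]
  set S₂ : ℝ := ∑ i ∈ Finset.Icc (N - k) N, β ^ i with hS₂
  set S₁ : ℝ := ∑ i ∈ Finset.Icc 1 (N - k - 1), β ^ i with hS₁
  have hsplit : ∑ i ∈ Finset.Icc 1 N, β ^ i = S₁ + S₂ := by
    rw [hS₁, hS₂]
    have h1 : Finset.Icc 1 N = Finset.Ioc 0 N := by rw [← Finset.Icc_add_one_left_eq_Ioc]; rfl
    have h2 : Finset.Icc 1 (N - k - 1) = Finset.Ioc 0 (N - k - 1) := by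
      rw [← Finset.Icc_add_one_left_eq_Ioc]; rfl
    have h3 : Finset.Icc (N - k) N = Finset.Ioc (N - k - 1) N := by
      rw [← Finset.Icc_add_one_left_eq_Ioc]; congr 1; omega
    rw [h1, h2, h3]
    rw [← Finset.sum_Ioc_consecutive _ (by omega : 0 ≤ N - k - 1) (by omega : N - k - 1 ≤ N)]
  rw [hsplit]
  have hS₂le : S₂ ≤ ((k : ℝ) + 1) * β ^ (N - k) := by
    have := Finset.sum_le_card_nsmul (Finset.Icc (N - k) N) (fun i => β ^ i) (β ^ (N - k))
      (fun i hi => by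
        simp only [Finset.mem_Icc] at hi
        exact pow_le_pow_of_le_one hβ0.le hβ1.le hi.1)
    rw [Nat.card_Icc] at this
    have hcard : N + 1 - (N - k) = k + 1 := by omega
    rw [hcard] at this
    simpa [nsmul_eq_mul, add_comm] using this
  have hS₂0 : 0 ≤ S₂ :=
    Finset.sum_nonneg fun i _ => (pow_pos hβ0 i).le
  have hcast : ((N - k - 1 : ℕ) : ℝ) = (N : ℝ) - ((k : ℝ) + 1) := by
    have h : N - k - 1 = N - (k + 1) := by omega
    rw [h, Nat.cast_sub (by omega)]
    push_cast; ring
  have hS₁ge : ((N : ℝ) - ((k : ℝ) + 1)) * β ^ (N - k) ≤ S₁ := by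
    have := Finset.card_nsmul_le_sum (Finset.Icc 1 (N - k - 1)) (fun i => β ^ i) (β ^ (N - k))
      (fun i hi => by
        simp only [Finset.mem_Icc] at hi
        exact pow_le_pow_of_le_one hβ0.le hβ1.le (by omega))
    rw [Nat.card_Icc] at this
    have hcard : N - k - 1 + 1 - 1 = N - k - 1 := by omega
    rw [hcard, nsmul_eq_mul, hcast] at this
    exact this
  have hNk : ((k : ℝ) + 1) ≤ N := by exact_mod_cast hk
  nlinarith [pow_pos hβ0 (N - k), mul_nonneg (sub_nonneg.mpr hNk) hS₂0]

lemma aux_sum_mulVec {n : ℕ} (s : Finset ℕ) (M : ℕ → Matrix (Fin n) (Fin n) ℝ)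
    (x : Fin n → ℝ) (i : Fin n) :
    (∑ j ∈ s, M j).mulVec x i = ∑ j ∈ s, (M j).mulVec x i := by
  simp only [Matrix.mulVec, dotProduct, Finset.sum_apply, Matrix.sum_apply,
    Finset.sum_mul]
  rw [Finset.sum_comm]

/-- Contraction of the full-drop lifted matrix (Lemma 1(c)). The block `(c,k)` of
`Γ₁ ζ` is `(1/(k+1)) ∑_{i=0}^{k} (C c)^(N-i) *ᵥ (ζ c 0)`, where `C 0 = A₁`, `C 1 = B₁`
are the full-drop matrices.  On the subspace `E` the block-max of 1-norms contracts
by `q = max((1/N)∑_{i=1}^N βₐⁱ, (1/N)∑_{j=1}^N β_bʲ) < 1`. -/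
theorem lifted_fullDrop_contracts (n N : ℕ) [NeZero N]
    (C : Fin 2 → Matrix (Fin n) (Fin n) ℝ) (β : Fin 2 → ℝ)
    (hβ : ∀ c, 0 < β c ∧ β c < 1)
    (hnn : ∀ c i j, 0 ≤ C c i j) (hcs : ∀ c j, ∑ i, C c i j = 1)
    (hcontr : ∀ c (x : Fin n → ℝ), ∑ i, x i = 0 →
      ∑ i, |(C c).mulVec x i| ≤ β c * ∑ i, |x i|)
    (ζ : Fin 2 → Fin N → Fin n → ℝ)
    (hζE : ∀ c, ∑ i, ζ c 0 i = 0) :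
    (Finset.univ.sup' Finset.univ_nonempty
        (fun p : Fin 2 × Fin N =>
          ∑ i, |((1 / ((p.2 : ℕ) + 1 : ℝ)) •
            ∑ j ∈ Finset.range ((p.2 : ℕ) + 1), (C p.1 ^ (N - j))).mulVec (ζ p.1 0) i|))
      ≤ (max ((1 / (N : ℝ)) * ∑ i ∈ Finset.Icc 1 N, β 0 ^ i)
             ((1 / (N : ℝ)) * ∑ j ∈ Finset.Icc 1 N, β 1 ^ j)) *
        Finset.univ.sup' Finset.univ_nonempty
          (fun p : Fin 2 × Fin N => ∑ i, |ζ p.1 p.2 i|) := by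
  have hN : 0 < N := Nat.pos_of_ne_zero (NeZero.ne N)
  set q : ℝ := max ((1 / (N : ℝ)) * ∑ i ∈ Finset.Icc 1 N, β 0 ^ i)
      ((1 / (N : ℝ)) * ∑ j ∈ Finset.Icc 1 N, β 1 ^ j) with hq
  set M : ℝ := Finset.univ.sup' Finset.univ_nonempty
      (fun p : Fin 2 × Fin N => ∑ i, |ζ p.1 p.2 i|) with hM
  have hq0 : 0 ≤ q := by
    refine le_trans ?_ (le_max_left _ _)
    apply mul_nonneg
    · positivity
    · exact Finset.sum_nonneg fun i _ => pow_nonneg (hβ 0).1.le i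
  have hqc : ∀ c : Fin 2, (1 / (N : ℝ)) * ∑ i ∈ Finset.Icc 1 N, β c ^ i ≤ q := by
    intro c
    fin_cases c
    · exact le_max_left _ _
    · exact le_max_right _ _
  have hMc : ∀ c : Fin 2, ∑ i, |ζ c 0 i| ≤ M := by
    intro c
    exact Finset.le_sup' (fun p : Fin 2 × Fin N => ∑ i, |ζ p.1 p.2 i|)
      (Finset.mem_univ ((c, ⟨0, hN⟩) : Fin 2 × Fin N))
  apply Finset.sup'_le
  rintro ⟨c, kf⟩ _
  simp only
  set k : ℕ := (kf : ℕ) with hkdef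
  have hk : k < N := kf.isLt
  set x : Fin n → ℝ := ζ c 0 with hx
  have habs0 : 0 ≤ ∑ i, |x i| := Finset.sum_nonneg fun i _ => abs_nonneg _
  have hβc0 := (hβ c).1
  have hβc1 := (hβ c).2
  -- step 1: pull out the scalar
  have step1 : ∑ i, |((1 / ((k : ℕ) + 1 : ℝ)) •
        ∑ j ∈ Finset.range (k + 1), (C c ^ (N - j))).mulVec x i|
      = (1 / ((k : ℝ) + 1)) *
        ∑ i, |(∑ j ∈ Finset.range (k + 1), (C c ^ (N - j))).mulVec x i| := by
    rw [Finset.mul_sum]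
    refine Finset.sum_congr rfl fun i _ => ?_
    rw [Matrix.smul_mulVec, Pi.smul_apply, smul_eq_mul, abs_mul,
      abs_of_nonneg (by positivity : (0:ℝ) ≤ 1 / ((k : ℝ) + 1))]
  -- step 2: triangle inequality + power contraction
  have step2 : ∑ i, |(∑ j ∈ Finset.range (k + 1), (C c ^ (N - j))).mulVec x i|
      ≤ (∑ j ∈ Finset.range (k + 1), β c ^ (N - j)) * ∑ i, |x i| := by
    calc ∑ i, |(∑ j ∈ Finset.range (k + 1), (C c ^ (N - j))).mulVec x i|
        ≤ ∑ i, ∑ j ∈ Finset.range (k + 1), |(C c ^ (N - j)).mulVec x i| := by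
          refine Finset.sum_le_sum fun i _ => ?_
          rw [aux_sum_mulVec]
          exact Finset.abs_sum_le_sum_abs _ _
      _ = ∑ j ∈ Finset.range (k + 1), ∑ i, |(C c ^ (N - j)).mulVec x i| :=
          Finset.sum_comm
      _ ≤ ∑ j ∈ Finset.range (k + 1), β c ^ (N - j) * ∑ i, |x i| := by
          refine Finset.sum_le_sum fun j hj => ?_
          simp only [Finset.mem_range] at hj
          have hm : N - j = (N - j - 1) + 1 := by omega
          rw [hm]
          exact aux_pow (C c) (β c) hβc0.le (hcs c) (hcontr c) (N - j - 1) x (hζE c)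
      _ = (∑ j ∈ Finset.range (k + 1), β c ^ (N - j)) * ∑ i, |x i| := by
          rw [Finset.sum_mul]
  -- step 3: the average bound
  have step3 : (1 / ((k : ℝ) + 1)) * ∑ j ∈ Finset.range (k + 1), β c ^ (N - j)
      ≤ (1 / (N : ℝ)) * ∑ i ∈ Finset.Icc 1 N, β c ^ i := by
    rw [div_mul_eq_mul_div, div_mul_eq_mul_div, one_mul, one_mul,
      div_le_div_iff₀ (by positivity) (by exact_mod_cast hN)]
    calc (∑ j ∈ Finset.range (k + 1), β c ^ (N - j)) * (N : ℝ)
        = (N : ℝ) * ∑ j ∈ Finset.range (k + 1), β c ^ (N - j) := by ring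
      _ ≤ ((k : ℝ) + 1) * ∑ i ∈ Finset.Icc 1 N, β c ^ i :=
          aux_avg N k hk (β c) hβc0 hβc1
      _ = (∑ i ∈ Finset.Icc 1 N, β c ^ i) * ((k : ℝ) + 1) := by ring
  calc ∑ i, |((1 / ((k : ℕ) + 1 : ℝ)) •
        ∑ j ∈ Finset.range (k + 1), (C c ^ (N - j))).mulVec x i|
      = (1 / ((k : ℝ) + 1)) *
        ∑ i, |(∑ j ∈ Finset.range (k + 1), (C c ^ (N - j))).mulVec x i| := step1
    _ ≤ (1 / ((k : ℝ) + 1)) *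
        ((∑ j ∈ Finset.range (k + 1), β c ^ (N - j)) * ∑ i, |x i|) :=
        mul_le_mul_of_nonneg_left step2 (by positivity)
    _ = ((1 / ((k : ℝ) + 1)) * ∑ j ∈ Finset.range (k + 1), β c ^ (N - j)) * ∑ i, |x i| := by
        ring
    _ ≤ ((1 / (N : ℝ)) * ∑ i ∈ Finset.Icc 1 N, β c ^ i) * ∑ i, |x i| :=
        mul_le_mul_of_nonneg_right step3 habs0
    _ ≤ q * M := by
        refine mul_le_mul (hqc c) (hMc c) habs0 hq0
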